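/- Let E be a nonnegative integer and λ = √E. For every a ∈ L²(𝕋^d) and every orthonormal basis (ψ_1, …, ψ_m) of the eigenspace V_E, one has ∑_{i=1}^m |∫_{𝕋^d} a|ψ_i|² dx − ∫_{𝕋^d} a dx|² ≤ ∑_{n ∈ ℤ^d, 1 ≤ ‖n‖ ≤ 2λ} |â_n|² · #{k ∈ ℤ^d : ‖k‖ = ‖k+n‖ = λ}. -/

import Mathlib

open MeasureTheory Real BigOperators ComplexConjugate

noncomputable section

instance : Fact (0 < 2 * π) := ⟨by positivity⟩

/-- The flat torus `𝕋^d = ℝ^d/(2πℤ)^d`. -/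
abbrev Td (d : ℕ) := Fin d → AddCircle (2 * π)

/-- The normalized Haar probability measure on the flat torus. -/
def haarT (d : ℕ) : Measure (Td d) :=
  Measure.pi fun _ : Fin d => AddCircle.haarAddCircle

/-- The character `e_k(x) = e^{i⟨k,x⟩}` for `k ∈ ℤ^d`. -/
def eChar {d : ℕ} (k : Fin d → ℤ) (x : Td d) : ℂ := ∏ i, fourier (k i) (x i)

/-- Euclidean norm of a lattice point of `ℤ^d`. -/
def znorm {d : ℕ} (k : Fin d → ℤ) : ℝ := Real.sqrt (∑ i, ((k i : ℝ)) ^ 2)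

/-- The primitive lattice point `n̂` generating `n ≠ 0`: divide out the gcd of coordinates. -/
def primPart {d : ℕ} (n : Fin d → ℤ) : Fin d → ℤ := fun i => n i / Finset.univ.gcd n

/-- Fourier coefficient `â_n = ∫ a(x) e^{-i⟨n,x⟩} dx` of `a ∈ L²(𝕋^d)`. -/
def fcoef {d : ℕ} (a : Td d → ℂ) (n : Fin d → ℤ) : ℂ :=
  ∫ x, a x * conj (eChar n x) ∂(haarT d)

/-- Fourier transform `μ̂(n) = ∫ e^{-i⟨n,x⟩} dμ(x)` of a measure on `𝕋^d`. -/
def muF {d : ℕ} (μ : Measure (Td d)) (n : Fin d → ℤ) : ℂ :=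
  ∫ x, conj (eChar n x) ∂μ

/-- `N(λ) = #{k ∈ ℤ^d : ‖k‖ ≤ λ}`, the spectral counting function. -/
def latticeCount (d : ℕ) (lam : ℝ) : ℕ := Set.ncard {k : Fin d → ℤ | znorm k ≤ lam}

/-- An eigenbasis of `L²(𝕋^d)`: an orthonormal basis `(ψ_j)` of Laplace eigenfunctions
`ψ_j = ∑_{‖k‖ = Λ j} c_j(k) e_k`, with nondecreasing eigenvalues `(Λ j)²` (nonnegative
integers), orthonormality and completeness expressed via the Fourier coefficients. -/
structure Eigenbasis (d : ℕ) where
  ψ : ℕ → Td d → ℂ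
  Λ : ℕ → ℝ
  c : ℕ → (Fin d → ℤ) → ℂ
  nonneg : ∀ j, 0 ≤ Λ j
  mono : Monotone Λ
  eig_int : ∀ j, ∃ E : ℕ, Λ j ^ 2 = E
  repr : ∀ j x, ψ j x = ∑' k : Fin d → ℤ, c j k * eChar k x
  supp : ∀ j k, c j k ≠ 0 → znorm k = Λ j
  ortho : ∀ i j, ∑' k : Fin d → ℤ, c i k * conj (c j k) = if i = j then 1 else 0
  complete : ∀ k l : Fin d → ℤ, ∑' j : ℕ, c j k * conj (c j l) = if k = l then 1 else 0

/-- A function on the torus is smooth if its `(2πℤ)^d`-periodic lift to `ℝ^d` is `C^∞`. -/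
def SmoothOnTorus {d : ℕ} (a : Td d → ℂ) : Prop :=
  ContDiff ℝ (⊤ : ℕ∞) fun x : Fin d → ℝ => a fun i => (x i : AddCircle (2 * π))

variable {d : ℕ}

lemma eChar_mul_conj (k l : Fin d → ℤ) (x : Td d) :
    eChar k x * conj (eChar l x) = eChar (k - l) x := by
  simp only [eChar, ← Finset.prod_mul_distrib, map_prod]
  refine Finset.prod_congr rfl fun i _ => ?_
  rw [← fourier_neg, ← fourier_add]
  norm_num [sub_eq_add_neg]

lemma eChar_zero (x : Td d) : eChar (0 : Fin d → ℤ) x = 1 := by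
  simp [eChar]

lemma norm_eChar (k : Fin d → ℤ) (x : Td d) : ‖eChar k x‖ = 1 := by
  rw [eChar, norm_prod]
  exact Finset.prod_eq_one fun i _ => by exact Circle.norm_coe _

lemma continuous_eChar (k : Fin d → ℤ) : Continuous (eChar k) :=
  continuous_finset_prod _ fun i _ => (fourier (k i)).continuous.comp (continuous_apply i)


lemma znorm_nonneg (k : Fin d → ℤ) : 0 ≤ znorm k := Real.sqrt_nonneg _

/-- Euclidean-space vector attached to a lattice point. -/
def vE (k : Fin d → ℤ) : EuclideanSpace ℝ (Fin d) := WithLp.toLp 2 (fun i => (k i : ℝ))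

lemma znorm_eq_norm (k : Fin d → ℤ) : znorm k = ‖vE k‖ := by
  rw [EuclideanSpace.norm_eq, znorm]
  congr 1
  exact Finset.sum_congr rfl fun i _ => by rw [Real.norm_eq_abs, sq_abs]; rfl

lemma vE_add (k n : Fin d → ℤ) : vE (k + n) = vE k + vE n := by
  ext i; show ((k i + n i : ℤ) : ℝ) = (k i : ℝ) + (n i : ℝ); push_cast; ring

lemma znorm_triangle (k n : Fin d → ℤ) : znorm (k + n) ≤ znorm k + znorm n := by
  rw [znorm_eq_norm, znorm_eq_norm, znorm_eq_norm, vE_add]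
  exact norm_add_le _ _

lemma znorm_neg (k : Fin d → ℤ) : znorm (-k) = znorm k := by
  unfold znorm
  congr 1
  refine Finset.sum_congr rfl fun i _ => ?_
  have h : ((-k) i : ℤ) = -(k i) := rfl
  rw [h]
  push_cast
  rw [neg_sq]

lemma one_le_znorm {n : Fin d → ℤ} (hn : n ≠ 0) : 1 ≤ znorm n := by
  obtain ⟨i, hi⟩ : ∃ i, n i ≠ 0 := by
    by_contra h; push_neg at h; exact hn (funext h)
  have h1 : (1 : ℝ) ≤ ((n i : ℝ)) ^ 2 := by
    have : 1 ≤ |n i| := Int.one_le_abs hi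
    have : (1 : ℝ) ≤ |(n i : ℝ)| := by exact_mod_cast this
    nlinarith [sq_abs ((n i : ℝ))]
  have h2 : (1 : ℝ) ≤ ∑ j, ((n j : ℝ)) ^ 2 :=
    h1.trans (Finset.single_le_sum (f := fun j => ((n j : ℝ))^2) (fun j _ => sq_nonneg _) (Finset.mem_univ i))
  calc (1:ℝ) = Real.sqrt 1 := (Real.sqrt_one).symm
    _ ≤ znorm n := Real.sqrt_le_sqrt h2

lemma znorm_sq (k : Fin d → ℤ) : znorm k ^ 2 = ∑ i, ((k i : ℝ)) ^ 2 :=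
  Real.sq_sqrt (Finset.sum_nonneg fun i _ => sq_nonneg _)

lemma znorm_sq_iff {k : Fin d → ℤ} {E : ℕ} : znorm k ^ 2 = (E : ℝ) ↔ znorm k = Real.sqrt E := by
  constructor
  · intro h
    rw [← h, Real.sqrt_sq (znorm_nonneg k)]
  · intro h
    rw [h, Real.sq_sqrt (by positivity)]

lemma finite_sphere (E : ℕ) : {k : Fin d → ℤ | znorm k ^ 2 = (E : ℝ)}.Finite := by
  apply Set.Finite.subset (Set.Finite.pi fun i : Fin d => Set.finite_Icc (-(E:ℤ)) E)
  intro k hk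
  simp only [Set.mem_setOf_eq, znorm_sq] at hk
  intro i _
  have h1 : ((k i : ℝ)) ^ 2 ≤ (E : ℝ) := by
    rw [← hk]
    exact Finset.single_le_sum (f := fun j => ((k j : ℝ))^2) (fun j _ => sq_nonneg _) (Finset.mem_univ i)
  have h2 : (k i) ^ 2 ≤ (E : ℤ) := by exact_mod_cast h1
  have h3 : |k i| ≤ (E : ℤ) := by
    rcases eq_or_ne (k i) 0 with h | h
    · simp [h]
    · have : 1 ≤ |k i| := Int.one_le_abs h
      calc |k i| = 1 * |k i| := (one_mul _).symm
        _ ≤ |k i| * |k i| := mul_le_mul_of_nonneg_right this (abs_nonneg _)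
        _ = (k i)^2 := by rw [← abs_mul, abs_mul_self]; ring
        _ ≤ E := h2
  simp only [Set.mem_Icc]
  exact abs_le.1 h3

open Matrix in
lemma trace_mul_conjTranspose {ι : Type*} [Fintype ι] (X : Matrix ι ι ℂ) :
    Matrix.trace (X * Xᴴ) = ((∑ i, ∑ j, ‖X i j‖ ^ 2 : ℝ) : ℂ) := by
  simp only [Matrix.trace, Matrix.diag, Matrix.mul_apply, Matrix.conjTranspose_apply]
  push_cast
  refine Finset.sum_congr rfl fun i _ => Finset.sum_congr rfl fun j _ => ?_
  rw [show star (X i j) = conj (X i j) from rfl, Complex.mul_conj,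
    Complex.normSq_eq_norm_sq]
  push_cast; ring

open Matrix in
lemma diag_le_hs {m : ℕ} {ι : Type*} [Fintype ι] [DecidableEq ι]
    (C : Matrix (Fin m) ι ℂ) (M : Matrix ι ι ℂ) (h : Cᴴ * C = 1) :
    ∑ i, ‖(C * M * Cᴴ) i i‖ ^ 2 ≤ ∑ k, ∑ l, ‖M k l‖ ^ 2 := by
  set A := C * M * Cᴴ with hA
  have step1 : ∑ i, ‖A i i‖ ^ 2 ≤ ∑ i, ∑ j, ‖A i j‖ ^ 2 :=
    Finset.sum_le_sum fun i _ =>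
      Finset.single_le_sum (f := fun j => ‖A i j‖ ^ 2) (fun j _ => sq_nonneg _)
        (Finset.mem_univ i)
  refine step1.trans_eq ?_
  have hAH : Aᴴ = C * Mᴴ * Cᴴ := by
    rw [hA, Matrix.conjTranspose_mul, Matrix.conjTranspose_mul,
      Matrix.conjTranspose_conjTranspose, Matrix.mul_assoc]
  have hAAH : A * Aᴴ = C * (M * Mᴴ) * Cᴴ := by
    rw [hAH, hA]
    calc C * M * Cᴴ * (C * Mᴴ * Cᴴ) = C * M * (Cᴴ * C) * (Mᴴ * Cᴴ) := by
          simp only [Matrix.mul_assoc]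
      _ = C * (M * Mᴴ) * Cᴴ := by rw [h, Matrix.mul_one]; simp only [Matrix.mul_assoc]
  have htr : Matrix.trace (A * Aᴴ) = Matrix.trace (M * Mᴴ) := by
    rw [hAAH, Matrix.trace_mul_cycle, ← Matrix.mul_assoc, h, Matrix.one_mul]
  have h1 := trace_mul_conjTranspose A
  have h2 := trace_mul_conjTranspose M
  rw [h1, h2] at htr
  exact_mod_cast htr

instance : IsProbabilityMeasure (haarT d) := by
  unfold haarT; infer_instance

lemma eChar_conj (n : Fin d → ℤ) (x : Td d) : conj (eChar n x) = eChar (-n) x := by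
  simp only [eChar, map_prod]
  exact Finset.prod_congr rfl fun i _ => by rw [← fourier_neg]; rfl

lemma integral_a_mul_eChar (a : Td d → ℂ) (k l : Fin d → ℤ) :
    ∫ x, a x * (eChar k x * conj (eChar l x)) ∂(haarT d) = fcoef a (l - k) := by
  rw [fcoef]
  have h : ∀ x, eChar k x * conj (eChar l x) = conj (eChar (l - k) x) := fun x => by
    rw [eChar_mul_conj, eChar_conj, neg_sub]
  simp_rw [h]

lemma integrable_a_mul {a : Td d → ℂ} (ha : MemLp a 2 (haarT d)) (k l : Fin d → ℤ) :
    Integrable (fun x => a x * (eChar k x * conj (eChar l x))) (haarT d) := by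
  have haI : Integrable a (haarT d) := ha.integrable one_le_two
  have hm : AEStronglyMeasurable (fun x : Td d => eChar k x * conj (eChar l x)) (haarT d) :=
    ((continuous_eChar k).mul (continuous_star.comp (continuous_eChar l))).aestronglyMeasurable
  have hb : ∃ C, ∀ x : Td d, ‖eChar k x * conj (eChar l x)‖ ≤ C :=
    ⟨1, fun x => by rw [norm_mul, norm_eChar, RCLike.norm_conj, norm_eChar]; norm_num⟩
  have := haI.bdd_mul hm (Filter.Eventually.of_forall hb.choose_spec)
  simpa [mul_comm] using this

/-- variance bound on an individual eigenspace `V_E`. -/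
theorem statement5 (d : ℕ) (hd : 2 ≤ d) (E : ℕ)
    (a : Td d → ℂ) (ha : MemLp a 2 (haarT d))
    (m : ℕ) (ψ : Fin m → Td d → ℂ) (c : Fin m → (Fin d → ℤ) → ℂ)
    (hsupp : ∀ i k, c i k ≠ 0 → znorm k ^ 2 = E)
    (hrepr : ∀ i x, ψ i x = ∑' k : Fin d → ℤ, c i k * eChar k x)
    (hortho : ∀ i j, ∑' k : Fin d → ℤ, c i k * conj (c j k) = if i = j then 1 else 0)
    (hcomplete : ∀ k l : Fin d → ℤ, znorm k ^ 2 = E → znorm l ^ 2 = E →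
      ∑ i, c i k * conj (c i l) = if k = l then 1 else 0) :
    ∑ i, ‖(∫ x, a x * ((‖ψ i x‖ ^ 2 : ℝ) : ℂ) ∂(haarT d)) - ∫ x, a x ∂(haarT d)‖ ^ 2
      ≤ ∑' n : Fin d → ℤ,
          if 1 ≤ znorm n ∧ znorm n ≤ 2 * Real.sqrt E then
            ‖fcoef a n‖ ^ 2 *
              (Set.ncard {k : Fin d → ℤ |
                znorm k = Real.sqrt E ∧ znorm (k + n) = Real.sqrt E} : ℝ)
          else 0 := by
  classical
  set lam := Real.sqrt E with hlam
  have hfin := finite_sphere (d := d) E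
  set S : Finset (Fin d → ℤ) := hfin.toFinset with hS
  have hmemS : ∀ k, k ∈ S ↔ znorm k ^ 2 = (E : ℝ) := fun k => hfin.mem_toFinset
  have hc0 : ∀ i k, k ∉ S → c i k = 0 := by
    intro i k hk
    by_contra h
    exact hk ((hmemS k).2 (hsupp i k h))
  have haI : Integrable a (haarT d) := ha.integrable one_le_two
  set M : (Fin d → ℤ) → (Fin d → ℤ) → ℂ :=
    fun k l => if k = l then 0 else fcoef a (l - k) with hMdef
  -- `∫ a = fcoef a 0`
  have ha0 : ∫ x, a x ∂(haarT d) = fcoef a 0 := by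
    rw [fcoef]
    refine (integral_congr_ae (Filter.Eventually.of_forall fun x => ?_))
    show a x = a x * conj (eChar 0 x)
    rw [eChar_zero, map_one, mul_one]
  -- Step 1 : expansion of each diagonal term
  have key : ∀ i, (∫ x, a x * ((‖ψ i x‖ ^ 2 : ℝ) : ℂ) ∂(haarT d)) - ∫ x, a x ∂(haarT d)
      = ∑ k ∈ S, ∑ l ∈ S, c i k * conj (c i l) * M k l := by
    intro i
    have hpsi : ∀ x, ψ i x = ∑ k ∈ S, c i k * eChar k x := fun x => by
      rw [hrepr i x]
      exact tsum_eq_sum (fun k hk => by rw [hc0 i k hk, zero_mul])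
    have hInt : ∀ x, a x * ((‖ψ i x‖ ^ 2 : ℝ) : ℂ)
        = ∑ k ∈ S, ∑ l ∈ S, (c i k * conj (c i l)) * (a x * (eChar k x * conj (eChar l x))) := by
      intro x
      have hsq : ((‖ψ i x‖ ^ 2 : ℝ) : ℂ) = ψ i x * conj (ψ i x) := by
        rw [Complex.mul_conj, Complex.normSq_eq_norm_sq]
      rw [hsq, hpsi x, map_sum, Finset.sum_mul_sum, Finset.mul_sum]
      refine Finset.sum_congr rfl fun k hk => ?_
      rw [Finset.mul_sum]
      refine Finset.sum_congr rfl fun l hl => ?_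
      rw [map_mul]
      ring
    have hint_eq : (∫ x, a x * ((‖ψ i x‖ ^ 2 : ℝ) : ℂ) ∂(haarT d))
        = ∑ k ∈ S, ∑ l ∈ S, c i k * conj (c i l) * fcoef a (l - k) := by
      calc (∫ x, a x * ((‖ψ i x‖ ^ 2 : ℝ) : ℂ) ∂(haarT d))
          = ∫ x, ∑ k ∈ S, ∑ l ∈ S,
              (c i k * conj (c i l)) * (a x * (eChar k x * conj (eChar l x))) ∂(haarT d) := by
            exact integral_congr_ae (Filter.Eventually.of_forall fun x => hInt x)
        _ = ∑ k ∈ S, ∫ x, ∑ l ∈ S,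
              (c i k * conj (c i l)) * (a x * (eChar k x * conj (eChar l x))) ∂(haarT d) := by
            refine integral_finset_sum _ fun k _ => ?_
            exact integrable_finset_sum _ fun l _ =>
              ((integrable_a_mul ha k l).const_mul _)
        _ = ∑ k ∈ S, ∑ l ∈ S, ∫ x,
              (c i k * conj (c i l)) * (a x * (eChar k x * conj (eChar l x))) ∂(haarT d) := by
            refine Finset.sum_congr rfl fun k _ => ?_
            exact integral_finset_sum _ fun l _ => ((integrable_a_mul ha k l).const_mul _)
        _ = ∑ k ∈ S, ∑ l ∈ S, c i k * conj (c i l) * fcoef a (l - k) := by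
            refine Finset.sum_congr rfl fun k _ => Finset.sum_congr rfl fun l _ => ?_
            rw [MeasureTheory.integral_const_mul, integral_a_mul_eChar]
    have hnorm1 : ∑ k ∈ S, c i k * conj (c i k) = 1 := by
      have h1 : ∑' k : Fin d → ℤ, c i k * conj (c i k) = ∑ k ∈ S, c i k * conj (c i k) :=
        tsum_eq_sum (fun k hk => by rw [hc0 i k hk, zero_mul])
      rw [← h1, hortho i i, if_pos rfl]
    have hsplit : ∑ k ∈ S, ∑ l ∈ S, c i k * conj (c i l) * fcoef a (l - k)
        = (∑ k ∈ S, ∑ l ∈ S, c i k * conj (c i l) * M k l) + fcoef a 0 := by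
      have : ∀ k ∈ S, ∀ l ∈ S, c i k * conj (c i l) * fcoef a (l - k)
          = c i k * conj (c i l) * M k l
            + (if k = l then c i k * conj (c i l) * fcoef a 0 else 0) := by
        intro k _ l _
        rcases eq_or_ne k l with h | h
        · subst h
          simp [hMdef]
        · simp [hMdef, h]
      calc ∑ k ∈ S, ∑ l ∈ S, c i k * conj (c i l) * fcoef a (l - k)
          = ∑ k ∈ S, ∑ l ∈ S, (c i k * conj (c i l) * M k l
              + (if k = l then c i k * conj (c i l) * fcoef a 0 else 0)) := by
            refine Finset.sum_congr rfl fun k hk => Finset.sum_congr rfl fun l hl => ?_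
            exact this k hk l hl
        _ = (∑ k ∈ S, ∑ l ∈ S, c i k * conj (c i l) * M k l)
            + ∑ k ∈ S, ∑ l ∈ S, (if k = l then c i k * conj (c i l) * fcoef a 0 else 0) := by
            rw [← Finset.sum_add_distrib]
            exact Finset.sum_congr rfl fun k _ => Finset.sum_add_distrib
        _ = (∑ k ∈ S, ∑ l ∈ S, c i k * conj (c i l) * M k l) + fcoef a 0 := by
            congr 1
            have : ∀ k ∈ S, ∑ l ∈ S, (if k = l then c i k * conj (c i l) * fcoef a 0 else 0)
                = c i k * conj (c i k) * fcoef a 0 := by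
              intro k hk
              rw [Finset.sum_ite_eq S k (fun l => c i k * conj (c i l) * fcoef a 0), if_pos hk]
            rw [Finset.sum_congr rfl this, ← Finset.sum_mul, hnorm1, one_mul]
    rw [hint_eq, ha0, hsplit]
    ring
  -- Step 2 : Hilbert–Schmidt bound via matrices
  set Cm : Matrix (Fin m) {k // k ∈ S} ℂ := fun i k => c i k.1 with hCm
  set Mm : Matrix {k // k ∈ S} {k // k ∈ S} ℂ := fun k l => M k.1 l.1 with hMm
  have hCC : Cm.conjTranspose * Cm = 1 := by
    ext k l
    have hcom := hcomplete k.1 l.1 ((hmemS _).1 k.2) ((hmemS _).1 l.2)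
    have h3 : (Cm.conjTranspose * Cm) k l = conj (∑ i, c i k.1 * conj (c i l.1)) := by
      rw [Matrix.mul_apply, map_sum]
      refine Finset.sum_congr rfl fun i _ => ?_
      rw [Matrix.conjTranspose_apply]
      simp only [Matrix.conjTranspose_apply, hCm, map_mul, Complex.conj_conj,
        starRingEnd_apply, star_star]
    rw [h3, hcom]
    by_cases h : k = l
    · have h2 : k.1 = l.1 := by rw [h]
      simp [h, h2, Matrix.one_apply]
    · have h2 : k.1 ≠ l.1 := fun hv => h (Subtype.ext hv)
      simp [h, h2, Matrix.one_apply]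
  have hdiag : ∀ i, ∑ k ∈ S, ∑ l ∈ S, c i k * conj (c i l) * M k l
      = (Cm * Mm * Cm.conjTranspose) i i := by
    intro i
    rw [Finset.sum_comm, Matrix.mul_apply]
    rw [← Finset.sum_coe_sort S (fun l => ∑ k ∈ S, c i k * conj (c i l) * M k l)]
    refine Finset.sum_congr rfl fun l _ => ?_
    rw [Matrix.mul_apply, Finset.sum_mul]
    rw [← Finset.sum_coe_sort S (fun k => c i k * conj (c i l.1) * M k l.1)]
    refine Finset.sum_congr rfl fun k _ => ?_
    rw [Matrix.conjTranspose_apply]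
    simp only [Matrix.conjTranspose_apply, hCm, hMm, starRingEnd_apply]
    ring
  have step2 : ∑ i, ‖(∫ x, a x * ((‖ψ i x‖ ^ 2 : ℝ) : ℂ) ∂(haarT d))
        - ∫ x, a x ∂(haarT d)‖ ^ 2
      ≤ ∑ k ∈ S, ∑ l ∈ S, ‖M k l‖ ^ 2 := by
    have h1 : ∀ i : Fin m, ‖(∫ x, a x * ((‖ψ i x‖ ^ 2 : ℝ) : ℂ) ∂(haarT d))
        - ∫ x, a x ∂(haarT d)‖ ^ 2 = ‖(Cm * Mm * Cm.conjTranspose) i i‖ ^ 2 := fun i => by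
      rw [key i, hdiag i]
    rw [Finset.sum_congr rfl fun i _ => h1 i]
    refine (diag_le_hs Cm Mm hCC).trans_eq ?_
    rw [← Finset.sum_coe_sort S (fun k => ∑ l ∈ S, ‖M k l‖ ^ 2)]
    refine Finset.sum_congr rfl fun k _ => ?_
    rw [← Finset.sum_coe_sort S (fun l => ‖M k.1 l‖ ^ 2)]
  -- Step 3 : combinatorial reindexing
  refine step2.trans ?_

  have znorm_zero : znorm (0 : Fin d → ℤ) = 0 := by simp [znorm]
  set T : Finset ((Fin d → ℤ) × (Fin d → ℤ)) := (S ×ˢ S).filter (fun p => p.1 ≠ p.2) with hT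
  set D : Finset (Fin d → ℤ) := T.image (fun p => p.2 - p.1) with hD
  have hmemT : ∀ p : (Fin d → ℤ) × (Fin d → ℤ), p ∈ T ↔ (p.1 ∈ S ∧ p.2 ∈ S ∧ p.1 ≠ p.2) := by
    intro p
    simp [hT, Finset.mem_filter, Finset.mem_product, and_assoc]
  have hSnorm : ∀ k, k ∈ S ↔ znorm k = lam := fun k => (hmemS k).trans znorm_sq_iff
  have hDcond : ∀ n ∈ D, (1 ≤ znorm n ∧ znorm n ≤ 2 * lam) ∧ n ≠ 0 := by
    intro n hn
    obtain ⟨p, hpT, hpn⟩ := Finset.mem_image.1 hn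
    obtain ⟨h1, h2, h3⟩ := (hmemT p).1 hpT
    have hn0 : n ≠ 0 := by rw [← hpn]; exact sub_ne_zero_of_ne (Ne.symm h3)
    refine ⟨⟨one_le_znorm hn0, ?_⟩, hn0⟩
    have hp2 : p.2 = p.1 + n := by rw [← hpn]; abel
    have e1 : znorm p.1 = lam := (hSnorm _).1 h1
    have e2 : znorm (p.1 + n) = lam := by rw [← hp2]; exact (hSnorm _).1 h2
    have htri : znorm n ≤ znorm (p.1 + n) + znorm p.1 := by
      have h := znorm_triangle (p.1 + n) (-p.1)
      have e : p.1 + n + -p.1 = n := by abel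
      rw [e, znorm_neg] at h
      exact h
    rw [e1, e2] at htri
    linarith
  have hcount : ∀ n, n ≠ 0 →
      (T.filter (fun p => p.2 - p.1 = n)).card
        = Set.ncard {k : Fin d → ℤ | znorm k = lam ∧ znorm (k + n) = lam} := by
    intro n hn0
    have hseteq : {k : Fin d → ℤ | znorm k = lam ∧ znorm (k + n) = lam}
        = ↑(S.filter (fun k => k + n ∈ S)) := by
      ext k
      simp only [Set.mem_setOf_eq, Finset.coe_filter, Set.mem_setOf_eq]
      constructor
      · rintro ⟨h1, h2⟩
        exact ⟨(hSnorm k).2 h1, (hSnorm _).2 h2⟩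
      · rintro ⟨h1, h2⟩
        exact ⟨(hSnorm k).1 h1, (hSnorm _).1 h2⟩
    rw [hseteq, Set.ncard_coe_finset]
    apply Finset.card_bij (fun p _ => p.1)
    · intro p hp
      rw [Finset.mem_filter] at hp ⊢
      obtain ⟨hpT, hpn⟩ := hp
      obtain ⟨h1, h2, _⟩ := (hmemT p).1 hpT
      have hp2 : p.2 = p.1 + n := by rw [← hpn]; abel
      exact ⟨h1, by rw [← hp2]; exact h2⟩
    · intro p hp q hq hpq
      rw [Finset.mem_filter] at hp hq
      have hp2 : p.2 = p.1 + n := by rw [← hp.2]; abel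
      have hq2 : q.2 = q.1 + n := by rw [← hq.2]; abel
      exact Prod.ext hpq (by rw [hp2, hq2, hpq])
    · intro k hk
      rw [Finset.mem_filter] at hk
      refine ⟨(k, k + n), ?_, rfl⟩
      rw [Finset.mem_filter]
      refine ⟨(hmemT _).2 ⟨hk.1, hk.2, fun heq => hn0 (left_eq_add.1 heq)⟩, ?_⟩
      exact add_sub_cancel_left k n
  have e1 : ∑ k ∈ S, ∑ l ∈ S, ‖M k l‖ ^ 2 = ∑ p ∈ T, ‖fcoef a (p.2 - p.1)‖ ^ 2 := by
    have hne : ∀ p ∈ S ×ˢ S, ‖M p.1 p.2‖ ^ 2 ≠ 0 → p.1 ≠ p.2 := by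
      intro p _ hnz heq
      apply hnz
      simp [hMdef, heq]
    calc ∑ k ∈ S, ∑ l ∈ S, ‖M k l‖ ^ 2
        = ∑ p ∈ S ×ˢ S, ‖M p.1 p.2‖ ^ 2 :=
          (Finset.sum_product' S S (fun k l => ‖M k l‖ ^ 2)).symm
      _ = ∑ p ∈ T, ‖M p.1 p.2‖ ^ 2 := by rw [hT]; exact (Finset.sum_filter_of_ne hne).symm
      _ = ∑ p ∈ T, ‖fcoef a (p.2 - p.1)‖ ^ 2 := by
          refine Finset.sum_congr rfl fun p hp => ?_
          have h3 := ((hmemT p).1 hp).2.2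
          simp [hMdef, h3]
  have e2 : ∑ p ∈ T, ‖fcoef a (p.2 - p.1)‖ ^ 2
      = ∑ n ∈ D, (T.filter (fun p => p.2 - p.1 = n)).card • ‖fcoef a n‖ ^ 2 := by
    have hfib := Finset.sum_fiberwise_of_maps_to' (s := T) (t := D)
      (g := fun p : (Fin d → ℤ) × (Fin d → ℤ) => p.2 - p.1)
      (fun p hp => Finset.mem_image_of_mem _ hp) (fun n => ‖fcoef a n‖ ^ 2)
    rw [← hfib]
    exact Finset.sum_congr rfl fun n _ => Finset.sum_const _
  have e4 : ∀ n ∈ D, (T.filter (fun p => p.2 - p.1 = n)).card • ‖fcoef a n‖ ^ 2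
      = (if 1 ≤ znorm n ∧ znorm n ≤ 2 * lam then
          ‖fcoef a n‖ ^ 2 *
            (Set.ncard {k : Fin d → ℤ | znorm k = lam ∧ znorm (k + n) = lam} : ℝ)
        else 0) := by
    intro n hn
    obtain ⟨hcond, hn0⟩ := hDcond n hn
    rw [if_pos hcond, ← hcount n hn0, nsmul_eq_mul]
    ring
  have e3 : (∑' n : Fin d → ℤ,
        if 1 ≤ znorm n ∧ znorm n ≤ 2 * lam then
          ‖fcoef a n‖ ^ 2 *
            (Set.ncard {k : Fin d → ℤ | znorm k = lam ∧ znorm (k + n) = lam} : ℝ)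
        else 0)
      = ∑ n ∈ D,
        (if 1 ≤ znorm n ∧ znorm n ≤ 2 * lam then
          ‖fcoef a n‖ ^ 2 *
            (Set.ncard {k : Fin d → ℤ | znorm k = lam ∧ znorm (k + n) = lam} : ℝ)
        else 0) := by
    refine tsum_eq_sum fun n hn => ?_
    by_cases hcond : 1 ≤ znorm n ∧ znorm n ≤ 2 * lam
    · rw [if_pos hcond]
      have hn0 : n ≠ 0 := by
        intro h
        rw [h, znorm_zero] at hcond
        linarith [hcond.1]
      have hempty : {k : Fin d → ℤ | znorm k = lam ∧ znorm (k + n) = lam} = ∅ := by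
        ext k
        simp only [Set.mem_setOf_eq, Set.mem_empty_iff_false, iff_false, not_and]
        intro h1 h2
        apply hn
        refine Finset.mem_image.2 ⟨(k, k + n), ?_, add_sub_cancel_left k n⟩
        exact (hmemT _).2 ⟨(hSnorm k).2 h1, (hSnorm _).2 h2,
          fun heq => hn0 (left_eq_add.1 heq)⟩
      rw [hempty]
      simp
    · rw [if_neg hcond]
  exact le_of_eq (e1.trans (e2.trans ((Finset.sum_congr rfl e4).trans e3.symm)))
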